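/- Let X be a topological space, (E,ρ) a metric space, and f,g: X → E mappings with β(f) ≤ κ₁ and β(g) ≤ κ₂ for ordinals κ₁, κ₂ > 0. Then the diagonal mapping f△g: X → E × E (with the max metric), (f△g)(x) = (f(x), g(x)), satisfies β(f△g) ≤ κ₁·κ₂. -/

import Mathlib

open Set Filter Ordinal ENNReal

universe u v

section Defs

variable {X : Type u} {E : Type v}

/-- `f` restricted to `A` is `ε`-fragmented: every nonempty subset of `A` has a relatively
open nonempty piece on which the oscillation (diameter of the image) of `f` is at most `ε`. -/
def EpsFragOn [TopologicalSpace X] [PseudoEMetricSpace E] (f : X → E) (A : Set X)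
    (ε : ℝ≥0∞) : Prop :=
  ∀ F : Set X, F ⊆ A → F.Nonempty → ∃ V : Set X, IsOpen V ∧ (V ∩ F).Nonempty ∧
    EMetric.diam (f '' (V ∩ F)) ≤ ε

/-- The fragmentability index `frag f = inf {ε > 0 : f is ε-fragmented}` (with `inf ∅ = ∞`). -/
noncomputable def fragIdx [TopologicalSpace X] [PseudoEMetricSpace E] (f : X → E) : ℝ≥0∞ :=
  sInf {ε | 0 < ε ∧ EpsFragOn f Set.univ ε}

/-- A set `H` is resolvable: every nonempty `A ⊆ X` has a relatively open nonempty piece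
entirely inside `H` or entirely inside its complement. -/
def Resolvable [TopologicalSpace X] (H : Set X) : Prop :=
  ∀ A : Set X, A.Nonempty → ∃ U : Set X, IsOpen U ∧ (U ∩ A).Nonempty ∧
    (U ∩ A ⊆ H ∨ U ∩ A ⊆ Hᶜ)

/-- The σ-fragmentability index by resolvable sets. -/
noncomputable def sfragIdx [TopologicalSpace X] [PseudoEMetricSpace E] (f : X → E) : ℝ≥0∞ :=
  sInf {ε | 0 < ε ∧ ∃ H : ℕ → Set X, (∀ n, Resolvable (H n)) ∧ (⋃ n, H n) = Set.univ ∧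
    ∀ n, EpsFragOn f (H n) ε}

/-- `g` is constant on each set of some resolvable partition of `X`, i.e. on each difference
`U (γ+1) \ U γ` of an increasing transfinite sequence of open sets from `∅` to `X`,
continuous at limit ordinals. -/
def ConstOnResolvablePartition [TopologicalSpace X] (g : X → E) : Prop :=
  ∃ (κ : Ordinal.{u}) (U : Ordinal.{u} → Set X),
    (∀ α, IsOpen (U α)) ∧ (∀ α β : Ordinal, α ≤ β → U α ⊆ U β) ∧
    U 0 = ∅ ∧ U κ = Set.univ ∧
    (∀ γ, γ ≤ κ → Order.IsSuccLimit γ → U γ = ⋃ α < γ, U α) ∧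
    (∀ γ < κ, ∀ x ∈ U (γ + 1) \ U γ, ∀ y ∈ U (γ + 1) \ U γ, g x = g y)

/-- The transfinite derivation of open sets in the definition of the oscillation rank
`β(f, ε)`:  `U 0 = ∅`, `U (α+1) = U α ∪ {x ∉ U α : ∃ open V ∋ x, diam f (V \ U α) < ε}`,
and unions at limit ordinals. -/
noncomputable def oscSet [TopologicalSpace X] [PseudoEMetricSpace E] (f : X → E)
    (ε : ℝ≥0∞) (o : Ordinal.{u}) : Set X :=
  Ordinal.limitRecOn o ∅
    (fun _ U => U ∪ {x | x ∉ U ∧ ∃ V : Set X, IsOpen V ∧ x ∈ V ∧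
      EMetric.diam (f '' (V \ U)) < ε})
    (fun γ _ ih => ⋃ (β : Ordinal) (h : β < γ), ih β h)

/-- `f` has countable oscillation rank: `β(f) < ω₁`, i.e. for every `ε > 0` the derivation
reaches `X` at some countable ordinal. -/
def CountableOscRank [TopologicalSpace X] [PseudoEMetricSpace E] (f : X → E) : Prop :=
  ∀ ε : ℝ≥0∞, 0 < ε → ∃ α < ω₁, oscSet f ε α = Set.univ

/-- A transfinite sequence `(V α)_{α ≤ κ}` of open sets has property `*(f, ε)`. -/
def StarProp [TopologicalSpace X] [PseudoEMetricSpace E] (f : X → E) (ε : ℝ≥0∞)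
    (κ : Ordinal.{u}) (V : Ordinal.{u} → Set X) : Prop :=
  (∀ α, α ≤ κ → IsOpen (V α)) ∧ (∀ α β : Ordinal, α ≤ β → β ≤ κ → V α ⊆ V β) ∧
  V 0 = ∅ ∧ V κ = Set.univ ∧
  (∀ γ, γ ≤ κ → Order.IsSuccLimit γ → V γ = ⋃ α < γ, V α) ∧
  (∀ α < κ, ∀ x ∈ V (α + 1) \ V α, ∃ W : Set X, IsOpen W ∧ x ∈ W ∧
    EMetric.diam (f '' (W \ V α)) < ε)

/-- Uniform distance `d(f, g) = sup_x ρ(f x, g x)` (in `[0, ∞]`). -/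
noncomputable def unifDist [PseudoEMetricSpace E] (f g : X → E) : ℝ≥0∞ :=
  ⨆ x, edist (f x) (g x)

/-- Distance from `f` to the family of σ-fragmented mappings. -/
noncomputable def distToSFrag [TopologicalSpace X] [PseudoEMetricSpace E] (f : X → E) : ℝ≥0∞ :=
  ⨅ (g : {g : X → E // sfragIdx g = 0}), unifDist f g.1

end Defs

section Aux

variable {X : Type u} {E : Type v} [TopologicalSpace X] [PseudoEMetricSpace E]

lemma oscSet_zero (f : X → E) (ε : ℝ≥0∞) : oscSet f ε 0 = ∅ :=
  Ordinal.limitRecOn_zero _ _ _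

lemma oscSet_succ (f : X → E) (ε : ℝ≥0∞) (o : Ordinal.{u}) :
    oscSet f ε (o + 1) = oscSet f ε o ∪ {x | x ∉ oscSet f ε o ∧ ∃ V : Set X, IsOpen V ∧
      x ∈ V ∧ EMetric.diam (f '' (V \ oscSet f ε o)) < ε} := by
  rw [show o + 1 = Order.succ o from rfl]
  exact Ordinal.limitRecOn_succ _ _ _ _

lemma oscSet_limit (f : X → E) (ε : ℝ≥0∞) {o : Ordinal.{u}} (ho : Order.IsSuccLimit o) :
    oscSet f ε o = ⋃ β < o, oscSet f ε β :=
  Ordinal.limitRecOn_limit _ _ _ _ ho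

lemma oscSet_mono (f : X → E) (ε : ℝ≥0∞) : ∀ {a b : Ordinal.{u}}, a ≤ b →
    oscSet f ε a ⊆ oscSet f ε b := by
  intro a b
  induction b using Ordinal.limitRecOn with
  | zero => intro h; rw [nonpos_iff_eq_zero.mp h]
  | add_one o ih =>
    intro h
    rcases Order.le_succ_iff_eq_or_le.mp h with h | h
    · rw [h]; exact subset_rfl
    · refine (ih h).trans ?_
      rw [oscSet_succ]
      exact Set.subset_union_left
  | limit o ho ih =>
    intro h
    rcases eq_or_lt_of_le h with rfl | h
    · rfl
    · rw [oscSet_limit f ε ho]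
      exact fun x hx => Set.mem_biUnion h hx

/-- absorption: the witness set minus the current stage is contained in the next stage. -/
lemma oscSet_absorb (f : X → E) (ε : ℝ≥0∞) (o : Ordinal.{u}) {V : Set X} (hV : IsOpen V)
    (hd : EMetric.diam (f '' (V \ oscSet f ε o)) < ε) :
    V \ oscSet f ε o ⊆ oscSet f ε (o + 1) := by
  intro y hy
  rw [oscSet_succ]
  exact Or.inr ⟨hy.2, V, hV, hy.1, hd⟩

lemma diam_pair_image (f g : X → E) (S : Set X) :
    EMetric.diam ((fun x => (f x, g x)) '' S) ≤
      max (EMetric.diam (f '' S)) (EMetric.diam (g '' S)) := by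
  apply EMetric.diam_le
  rintro _ ⟨x, hx, rfl⟩ _ ⟨y, hy, rfl⟩
  rw [Prod.edist_eq]
  exact max_le_max
    (EMetric.edist_le_diam_of_mem (Set.mem_image_of_mem f hx) (Set.mem_image_of_mem f hy))
    (EMetric.edist_le_diam_of_mem (Set.mem_image_of_mem g hx) (Set.mem_image_of_mem g hy))

end Aux

/-- the diagonal map into `E × E` with the max metric satisfies
`β(f△g) ≤ κ₁ · κ₂` whenever `β(f) ≤ κ₁` and `β(g) ≤ κ₂` with `κ₁, κ₂ > 0`. -/
theorem stmt_14 {X E : Type*} [TopologicalSpace X] [MetricSpace E]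
    (f g : X → E) (kap1 kap2 : Ordinal) (h1 : 0 < kap1) (h2 : 0 < kap2)
    (hf : ∀ ε : ℝ≥0∞, 0 < ε → ∃ α ≤ kap1, oscSet f ε α = Set.univ)
    (hg : ∀ ε : ℝ≥0∞, 0 < ε → ∃ α ≤ kap2, oscSet g ε α = Set.univ) :
    ∀ ε : ℝ≥0∞, 0 < ε → ∃ α ≤ kap1 * kap2,
      oscSet (fun x => (f x, g x) : X → E × E) ε α = Set.univ := by
  intro ε hε
  set h : X → E × E := fun x => (f x, g x) with hdef
  obtain ⟨α₁, hα₁, hV1⟩ := hf ε hε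
  have hVk : oscSet f ε kap1 = Set.univ :=
    Set.eq_univ_of_univ_subset (hV1 ▸ oscSet_mono f ε hα₁)
  obtain ⟨γ₂, hγ₂, hU2⟩ := hg ε hε
  have main : ∀ γ : Ordinal, oscSet g ε γ ⊆ oscSet h ε (kap1 * γ) := by
    intro γ
    induction γ using Ordinal.limitRecOn with
    | zero => rw [oscSet_zero]; exact Set.empty_subset _
    | add_one γ ih =>
      have inner : ∀ α : Ordinal,
          oscSet g ε γ ∪ (oscSet f ε α ∩ oscSet g ε (γ + 1))
            ⊆ oscSet h ε (kap1 * γ + α) := by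
        intro α
        induction α using Ordinal.limitRecOn with
        | zero =>
          rw [oscSet_zero f ε, Set.empty_inter, Set.union_empty, add_zero]
          exact ih
        | add_one α ihα =>
          rw [← add_assoc]
          intro x hx
          by_cases hxW : x ∈ oscSet h ε (kap1 * γ + α)
          · exact oscSet_mono h ε (le_self_add (b := 1)) hxW
          have hxnotUγ : x ∉ oscSet g ε γ := fun hxU => hxW (ihα (Or.inl hxU))
          have hx' : x ∈ oscSet f ε (α + 1) ∩ oscSet g ε (γ + 1) := by
            rcases hx with h' | h'
            · exact absurd h' hxnotUγ
            · exact h'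
          have hxnotVα : x ∉ oscSet f ε α := fun hv => hxW (ihα (Or.inr ⟨hv, hx'.2⟩))
          have hxf : x ∈ oscSet f ε (α + 1) := hx'.1
          rw [oscSet_succ] at hxf
          rcases hxf with hxf | ⟨-, Wf, hWfo, hxWf, hWfd⟩
          · exact absurd hxf hxnotVα
          have hxg := hx'.2
          rw [oscSet_succ] at hxg
          rcases hxg with hxg | ⟨-, Vg, hVgo, hxVg, hVgd⟩
          · exact absurd hxg hxnotUγ
          refine oscSet_absorb h ε _ (hWfo.inter hVgo) ?_ ⟨⟨hxWf, hxVg⟩, hxW⟩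
          have hsub1 : (Wf ∩ Vg) \ oscSet h ε (kap1 * γ + α) ⊆ Vg \ oscSet g ε γ := by
            rintro y ⟨⟨-, hyVg⟩, hyD⟩
            exact ⟨hyVg, fun hy => hyD (ihα (Or.inl hy))⟩
          have hsub2 : (Wf ∩ Vg) \ oscSet h ε (kap1 * γ + α) ⊆ Wf \ oscSet f ε α := by
            rintro y ⟨⟨hyWf, hyVg⟩, hyD⟩
            refine ⟨hyWf, fun hyV => hyD (ihα (Or.inr ⟨hyV, ?_⟩))⟩
            exact oscSet_absorb g ε γ hVgo hVgd ⟨hyVg, fun hy => hyD (ihα (Or.inl hy))⟩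
          calc EMetric.diam (h '' ((Wf ∩ Vg) \ oscSet h ε (kap1 * γ + α)))
              ≤ max (EMetric.diam (f '' ((Wf ∩ Vg) \ oscSet h ε (kap1 * γ + α))))
                  (EMetric.diam (g '' ((Wf ∩ Vg) \ oscSet h ε (kap1 * γ + α)))) :=
                diam_pair_image f g _
            _ < ε := max_lt
                (lt_of_le_of_lt (EMetric.diam_mono (Set.image_mono hsub2)) hWfd)
                (lt_of_le_of_lt (EMetric.diam_mono (Set.image_mono hsub1)) hVgd)
        | limit α hα ihα =>
          rintro x (hx | ⟨hxV, hxU⟩)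
          · exact oscSet_mono h ε le_self_add (ih hx)
          · rw [oscSet_limit f ε hα] at hxV
            simp only [Set.mem_iUnion] at hxV
            obtain ⟨β, hβ, hxβ⟩ := hxV
            exact oscSet_mono h ε (add_le_add_right hβ.le _) (ihα β hβ (Or.inr ⟨hxβ, hxU⟩))
      rw [mul_add_one]
      intro x hx
      exact inner kap1 (Or.inr ⟨by rw [hVk]; trivial, hx⟩)
    | limit γ hγ ih =>
      rw [oscSet_limit g ε hγ]
      intro x hx
      simp only [Set.mem_iUnion] at hx
      obtain ⟨β, hβ, hxβ⟩ := hx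
      exact oscSet_mono h ε (mul_le_mul_right hβ.le kap1) (ih β hβ hxβ)
  exact ⟨kap1 * γ₂, mul_le_mul_right hγ₂ kap1, Set.eq_univ_of_univ_subset (hU2 ▸ main γ₂)⟩
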